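/- Let H be a semi-inner product space of holomorphic functions on 𝔻, closed under multiplication by z, such that ‖z f‖ ≥ ‖f‖ for all f ∈ H. Then for any λ with |λ| = 1, any 0 ≤ r < 1, and any f ∈ H, one has ‖(z-λ)f‖ ≤ (2/(1+r)) ‖(z-rλ)f‖. -/
import Mathlib


open Metric Complex

theorem stmt7 (H : Submodule ℂ (ℂ → ℂ))
    (hhol : ∀ f ∈ H, DifferentiableOn ℂ f (ball (0:ℂ) 1))
    (ip : (ℂ → ℂ) → (ℂ → ℂ) → ℂ)
    -- semi-inner product axioms on H
    (hadd : ∀ f g h, f ∈ H → g ∈ H → h ∈ H → ip (f + g) h = ip f h + ip g h)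
    (hsmul : ∀ (c : ℂ) f g, f ∈ H → g ∈ H → ip (c • f) g = c * ip f g)
    (hsymm : ∀ f g, f ∈ H → g ∈ H → ip f g = (starRingEnd ℂ) (ip g f))
    (hpos : ∀ f ∈ H, 0 ≤ (ip f f).re)
    -- H is closed under multiplication by z
    (hz : ∀ f ∈ H, (fun z => z * f z) ∈ H)
    -- expansivity: ‖zf‖ ≥ ‖f‖
    (hexp : ∀ f ∈ H,
      Real.sqrt (ip f f).re ≤
        Real.sqrt (ip (fun z => z * f z) (fun z => z * f z)).re)
    (lam : ℂ) (hlam : ‖lam‖ = 1) (r : ℝ) (hr0 : 0 ≤ r) (hr1 : r < 1)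
    (f : ℂ → ℂ) (hfH : f ∈ H) :
    Real.sqrt (ip (fun z => (z - lam) * f z) (fun z => (z - lam) * f z)).re ≤
      (2 / (1 + r)) *
        Real.sqrt (ip (fun z => (z - (r : ℂ) * lam) * f z)
          (fun z => (z - (r : ℂ) * lam) * f z)).re := by
  classical
  have hgH : (fun z => z * f z) ∈ H := hz f hfH
  set g : ℂ → ℂ := fun z => z * f z with hgdef
  have hgg : (starRingEnd ℂ) (ip g g) = ip g g := (hsymm g g hgH hgH).symm
  have hff : (starRingEnd ℂ) (ip f f) = ip f f := (hsymm f f hfH hfH).symm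
  have hfg : (starRingEnd ℂ) (ip f g) = ip g f := by
    rw [hsymm f g hfH hgH, Complex.conj_conj]
  set A : ℝ := (ip g g).re with hA
  set B : ℝ := (ip f f).re with hB
  set C : ℝ := (lam * (starRingEnd ℂ) (ip g f)).re with hC
  -- expansion of the quadratic form
  have expand : ∀ c : ℂ, (ip (g + c • f) (g + c • f)).re
      = A + 2 * (c * (starRingEnd ℂ) (ip g f)).re + Complex.normSq c * B := by
    intro c
    have hcf : c • f ∈ H := H.smul_mem c hfH
    have hsum : g + c • f ∈ H := H.add_mem hgH hcf
    have e1 : ip (g + c • f) (g + c • f)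
        = ip g (g + c • f) + c * ip f (g + c • f) := by
      rw [hadd g (c • f) (g + c • f) hgH hcf hsum, hsmul c f (g + c • f) hfH hsum]
    have e2 : ip g (g + c • f) = (starRingEnd ℂ) (ip g g + c * ip f g) := by
      rw [hsymm g (g + c • f) hgH hsum, hadd g (c • f) g hgH hcf hgH,
        hsmul c f g hfH hgH]
    have e3 : ip f (g + c • f) = (starRingEnd ℂ) (ip g f + c * ip f f) := by
      rw [hsymm f (g + c • f) hfH hsum, hadd g (c • f) f hgH hcf hfH,
        hsmul c f f hfH hfH]
    have e4 : ip (g + c • f) (g + c • f)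
        = ip g g + ((starRingEnd ℂ) c * ip g f
            + c * (starRingEnd ℂ) (ip g f)) + (c * (starRingEnd ℂ) c) * ip f f := by
      rw [e1, e2, e3]
      simp only [map_add, map_mul, hgg, hff, hfg]
      ring
    have e5 : ((starRingEnd ℂ) c * ip g f
        + c * (starRingEnd ℂ) (ip g f)).re
        = 2 * (c * (starRingEnd ℂ) (ip g f)).re := by
      have : (starRingEnd ℂ) c * ip g f
          = (starRingEnd ℂ) (c * (starRingEnd ℂ) (ip g f)) := by
        simp [map_mul]
      rw [this, Complex.add_re, Complex.conj_re]
      ring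
    have e6 : c * (starRingEnd ℂ) c = (Complex.normSq c : ℂ) := Complex.mul_conj c
    rw [e4, Complex.add_re, Complex.add_re, e5, e6, Complex.re_ofReal_mul]
  have hnormSqlam : Complex.normSq lam = 1 := by
    have : Complex.normSq lam = ‖lam‖ ^ 2 := (Complex.sq_norm lam).symm
    rw [this, hlam]; norm_num
  -- identify the three quadratic quantities
  have eq1 : (fun z => (z - lam) * f z) = g + (-lam) • f := by
    funext z; simp [hgdef]; ring
  have eq2 : (fun z => (z - (r : ℂ) * lam) * f z) = g + (-((r : ℂ) * lam)) • f := by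
    funext z; simp [hgdef]; ring
  have N1 : (ip (fun z => (z - lam) * f z) (fun z => (z - lam) * f z)).re
      = A - 2 * C + B := by
    rw [eq1, expand (-lam)]
    simp [hnormSqlam, hC]
    ring
  have Nr : (ip (fun z => (z - (r : ℂ) * lam) * f z)
      (fun z => (z - (r : ℂ) * lam) * f z)).re = A - 2 * r * C + r ^ 2 * B := by
    rw [eq2, expand (-((r : ℂ) * lam))]
    have : (-((r : ℂ) * lam) * (starRingEnd ℂ) (ip g f)).re
        = -(r * C) := by
      have : -((r : ℂ) * lam) * (starRingEnd ℂ) (ip g f)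
          = -((r : ℂ) * (lam * (starRingEnd ℂ) (ip g f))) := by ring
      rw [this, Complex.neg_re, Complex.re_ofReal_mul]
    rw [this]
    simp [Complex.normSq_mul, hnormSqlam, Complex.normSq_ofReal]
    ring
  -- positivity facts
  have hP : 0 ≤ A + 2 * C + B := by
    have := hpos (g + lam • f) (H.add_mem hgH (H.smul_mem lam hfH))
    rwa [expand lam, hnormSqlam, one_mul] at this
  have hBpos : 0 ≤ B := hpos f hfH
  have hApos : 0 ≤ A := hpos g hgH
  have hN1pos : 0 ≤ A - 2 * C + B := by
    have := hpos (fun z => (z - lam) * f z)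
      (by rw [eq1]; exact H.add_mem hgH (H.smul_mem _ hfH))
    rwa [N1] at this
  -- expansivity gives B ≤ A
  have hAB : B ≤ A := by
    have h := hexp f hfH
    rw [← hgdef] at h
    have h1 : Real.sqrt B ≤ Real.sqrt A := h
    nlinarith [Real.sq_sqrt hBpos, Real.sq_sqrt hApos, Real.sqrt_nonneg A,
      Real.sqrt_nonneg B]
  -- key algebraic inequality
  have hr1' : (0:ℝ) < 1 + r := by linarith
  have key : A - 2 * C + B ≤ (2 / (1 + r)) ^ 2 * (A - 2 * r * C + r ^ 2 * B) := by
    rw [div_pow, div_mul_eq_mul_div, le_div_iff₀ (by positivity)]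
    nlinarith [mul_nonneg (mul_nonneg (sub_nonneg.2 hr1.le) (sub_nonneg.2 hr1.le)) hP,
      mul_nonneg (mul_nonneg (sub_nonneg.2 hr1.le) (by linarith : (0:ℝ) ≤ 2 + 2*r))
        (sub_nonneg.2 hAB)]
  rw [N1, Nr]
  calc Real.sqrt (A - 2 * C + B)
      ≤ Real.sqrt ((2 / (1 + r)) ^ 2 * (A - 2 * r * C + r ^ 2 * B)) :=
        Real.sqrt_le_sqrt key
    _ = (2 / (1 + r)) * Real.sqrt (A - 2 * r * C + r ^ 2 * B) := by
        rw [Real.sqrt_mul (sq_nonneg _), Real.sqrt_sq (by positivity)]
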